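/- Let p, a₁, …, a_k ∈ ℤ^d, and let c, v ∈ ℂ^d be such that ⟨v, a_i⟩ ≠ 0 for all i = 1, …, k, where ⟨w, a⟩ = ∑_{j=1}^d w_j a_j for w ∈ ℂ^d and a ∈ ℤ^d. Let l be the number of indices i ∈ {1, …, k} with exp⟨c, a_i⟩ = 1. Then there exist ε > 0 and a function h analytic on the disc {τ ∈ ℂ : |τ| < ε} such that for every τ with 0 < |τ| < ε one has exp⟨c + τv, a_i⟩ ≠ 1 for all i, and h(τ) = τ^l · exp⟨c + τv, p⟩ / ∏_{i=1}^k (1 − exp⟨c + τv, a_i⟩). In other words, the function τ ↦ exp⟨c + τv, p⟩ / ∏_{i=1}^k (1 − exp⟨c + τv, a_i⟩) has a pole of order at most l at τ = 0. -/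

import Mathlib

open Complex Filter Topology

noncomputable def expAux : ℂ → ℂ := fun z => if z = 0 then 1 else (Complex.exp z - 1) / z

lemma expAux_analyticAt : AnalyticAt ℂ expAux 0 := by
  apply Complex.analyticAt_of_differentiable_on_punctured_nhds_of_continuousAt
  · filter_upwards [self_mem_nhdsWithin] with z (hz : z ≠ 0)
    have h1 : DifferentiableAt ℂ (fun w => (Complex.exp w - 1) / w) z :=
      ((Complex.differentiable_exp z).sub_const 1).div differentiableAt_id hz
    apply h1.congr_of_eventuallyEq
    filter_upwards [isOpen_compl_singleton.mem_nhds hz] with w (hw : w ≠ 0)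
    simp [expAux, hw]
  · have hd : HasDerivAt Complex.exp 1 0 := by simpa using Complex.hasDerivAt_exp 0
    rw [hasDerivAt_iff_tendsto_slope] at hd
    have : Filter.Tendsto expAux (𝓝[≠] (0:ℂ)) (𝓝 1) := by
      refine hd.congr' ?_
      filter_upwards [self_mem_nhdsWithin] with z (hz : z ≠ 0)
      simp [expAux, hz, slope, Complex.exp_zero]
      ring
    rw [ContinuousAt]
    simp only [expAux, if_pos rfl]
    rw [← nhdsNE_sup_pure 0]
    rw [Filter.tendsto_sup]
    refine ⟨this, ?_⟩
    have := tendsto_pure_nhds expAux 0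
    simpa [expAux] using this

/-- The pairing `⟨w, a⟩ = ∑ j, w j * a j` between a complex vector and an integer vector. -/
noncomputable def cPair {d : ℕ} (w : Fin d → ℂ) (a : Fin d → ℤ) : ℂ :=
  ∑ j, w j * (a j : ℂ)

lemma cPair_add_smul {d : ℕ} (c v : Fin d → ℂ) (τ : ℂ) (b : Fin d → ℤ) :
    cPair (c + τ • v) b = cPair c b + τ * cPair v b := by
  simp only [cPair, Pi.add_apply, Pi.smul_apply, smul_eq_mul, add_mul, Finset.sum_add_distrib,
    Finset.mul_sum]
  ring_nf

theorem stmt_8 (d k : ℕ) (p : Fin d → ℤ) (a : Fin k → Fin d → ℤ)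
    (c v : Fin d → ℂ) (hv : ∀ i, cPair v (a i) ≠ 0)
    (l : ℕ) (hl : l = Set.ncard {i : Fin k | Complex.exp (cPair c (a i)) = 1}) :
    ∃ ε > (0 : ℝ), ∃ h : ℂ → ℂ,
      AnalyticOnNhd ℂ h (Metric.ball (0 : ℂ) ε) ∧
      ∀ τ : ℂ, 0 < ‖τ‖ → ‖τ‖ < ε →
        (∀ i, Complex.exp (cPair (c + τ • v) (a i)) ≠ 1) ∧
        h τ = τ ^ l * Complex.exp (cPair (c + τ • v) p) /
            ∏ i, (1 - Complex.exp (cPair (c + τ • v) (a i))) := by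
  classical
  set g : Fin k → ℂ → ℂ := fun i τ =>
    if Complex.exp (cPair c (a i)) = 1 then
      -(cPair v (a i)) * expAux (τ * cPair v (a i))
    else 1 - Complex.exp (cPair c (a i)) * Complex.exp (τ * cPair v (a i)) with hg
  have hgA : ∀ i, AnalyticAt ℂ (g i) 0 := by
    intro i
    by_cases hei : Complex.exp (cPair c (a i)) = 1
    · simp only [hg, if_pos hei]
      have hin : AnalyticAt ℂ (fun τ : ℂ => τ * cPair v (a i)) 0 :=
        analyticAt_id.mul analyticAt_const
      have h2 : AnalyticAt ℂ (expAux ∘ fun τ : ℂ => τ * cPair v (a i)) 0 := by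
        refine AnalyticAt.comp ?_ hin
        show AnalyticAt ℂ expAux (0 * cPair v (a i))
        rw [zero_mul]; exact expAux_analyticAt
      exact analyticAt_const.mul h2
    · simp only [hg, if_neg hei]
      exact analyticAt_const.sub (analyticAt_const.mul
        ((analyticAt_id.mul analyticAt_const).cexp))
  have hg0 : ∀ i, g i 0 ≠ 0 := by
    intro i
    by_cases hei : Complex.exp (cPair c (a i)) = 1
    · simp [hg, hei, expAux, hv i]
    · simp only [hg, if_neg hei, zero_mul, Complex.exp_zero, mul_one]
      exact sub_ne_zero.mpr (fun hh => hei hh.symm)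
  have hev : ∀ᶠ τ in 𝓝 (0:ℂ), ∀ i, AnalyticAt ℂ (g i) τ ∧ g i τ ≠ 0 := by
    rw [eventually_all]
    intro i
    exact ((hgA i).eventually_analyticAt).and
      (((hgA i).continuousAt.eventually_ne (hg0 i)))
  obtain ⟨ε, hε, hball⟩ := Metric.eventually_nhds_iff_ball.mp hev
  refine ⟨ε, hε, fun τ => Complex.exp (cPair c p + τ * cPair v p) / ∏ i, g i τ, ?_, ?_⟩
  · intro x hx
    have hxb := hball x hx
    refine AnalyticAt.div ?_ ?_ ?_
    · exact (analyticAt_const.add (analyticAt_id.mul analyticAt_const)).cexp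
    · exact Finset.analyticAt_fun_prod _ (fun i _ => (hxb i).1)
    · exact Finset.prod_ne_zero_iff.mpr (fun i _ => (hxb i).2)
  · intro τ hτ0 hτε
    have hτ : τ ≠ 0 := by simpa [norm_pos_iff] using hτ0
    have hτb := hball τ (by simpa [Metric.mem_ball, dist_zero_right] using hτε)
    have hfac : ∀ i, 1 - Complex.exp (cPair (c + τ • v) (a i)) =
        (if Complex.exp (cPair c (a i)) = 1 then τ else 1) * g i τ := by
      intro i
      rw [cPair_add_smul, Complex.exp_add]
      by_cases hei : Complex.exp (cPair c (a i)) = 1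
      · have hts : τ * cPair v (a i) ≠ 0 := mul_ne_zero hτ (hv i)
        rw [if_pos hei, hei, one_mul]
        simp only [hg, if_pos hei, expAux, if_neg hts]
        have hvi := hv i
        field_simp
        ring
      · rw [if_neg hei]
        simp only [hg, if_neg hei]
        ring
    constructor
    · intro i
      have hfi := hfac i
      have hne : (if Complex.exp (cPair c (a i)) = 1 then τ else 1) * g i τ ≠ 0 := by
        apply mul_ne_zero _ (hτb i).2
        split <;> simp [hτ]
      rw [← hfi] at hne
      exact fun hh => hne (by rw [hh]; ring)
    · have hlcard : l = (Finset.univ.filter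
          (fun i : Fin k => Complex.exp (cPair c (a i)) = 1)).card := by
        have hset : {i : Fin k | Complex.exp (cPair c (a i)) = 1} =
            ↑(Finset.univ.filter (fun i : Fin k => Complex.exp (cPair c (a i)) = 1)) := by
          ext i; simp
        rw [hl, hset, Set.ncard_coe_finset]
      have hprod : ∏ i, (1 - Complex.exp (cPair (c + τ • v) (a i))) =
          τ ^ l * ∏ i, g i τ := by
        rw [Finset.prod_congr rfl (fun i _ => hfac i), Finset.prod_mul_distrib]
        congr 1
        rw [Finset.prod_ite, Finset.prod_const, Finset.prod_const, one_pow, mul_one, hlcard]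
      rw [hprod, cPair_add_smul]
      have hgprod : ∏ i, g i τ ≠ 0 := Finset.prod_ne_zero_iff.mpr (fun i _ => (hτb i).2)
      have hpl : (τ : ℂ) ^ l ≠ 0 := pow_ne_zero _ hτ
      field_simp
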